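/- Let M be a module over the Weyl algebra W_V ⊗ W (W any unital algebra) on which a lagrangian subspace m ⊂ V acts by locally nilpotent endomorphisms. Then the natural map S(m*) ⊗ M^m → M, p₁⋯p_k ⊗ v ↦ p₁⋯p_k·v, is an isomorphism of modules; in particular M ≅ K[m] ⊗ M^m. -/

import Mathlib

private lemma aux_qp_pow {A : Type*} [Ring A] {p q : A} (h : q * p - p * q = 1) :
    ∀ n : ℕ, q * p ^ (n + 1) = p ^ (n + 1) * q + (n + 1) • p ^ n := by
  have h1 : q * p = p * q + 1 := sub_eq_iff_eq_add'.mp h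
  intro n
  induction n with
  | zero => simpa using h1
  | succ n ih =>
    calc q * p ^ (n + 2) = (q * p ^ (n + 1)) * p := by rw [pow_succ, mul_assoc]
    _ = (p ^ (n + 1) * q + (n + 1) • p ^ n) * p := by rw [ih]
    _ = p ^ (n + 1) * (q * p) + (n + 1) • p ^ (n + 1) := by
        rw [add_mul, smul_mul_assoc, mul_assoc, ← pow_succ]
    _ = p ^ (n + 2) * q + (p ^ (n + 1) + (n + 1) • p ^ (n + 1)) := by
        rw [h1, mul_add, mul_one, ← mul_assoc, ← pow_succ, add_assoc]
    _ = p ^ (n + 2) * q + (n + 2) • p ^ (n + 1) := by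
        rw [add_comm (p ^ (n+1)), ← succ_nsmul]

private lemma aux_q_pow_p {A : Type*} [Ring A] {p q : A} (h : q * p - p * q = 1) :
    ∀ n : ℕ, q ^ (n + 1) * p = p * q ^ (n + 1) + (n + 1) • q ^ n := by
  have h1 : q * p = p * q + 1 := sub_eq_iff_eq_add'.mp h
  intro n
  induction n with
  | zero => simpa using h1
  | succ n ih =>
    calc q ^ (n + 2) * p = q * (q ^ (n + 1) * p) := by rw [pow_succ', mul_assoc]
    _ = q * (p * q ^ (n + 1) + (n + 1) • q ^ n) := by rw [ih]
    _ = (q * p) * q ^ (n + 1) + (n + 1) • q ^ (n + 1) := by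
        rw [mul_add, mul_smul_comm, ← mul_assoc, ← pow_succ']
    _ = p * q ^ (n + 2) + (q ^ (n + 1) + (n + 1) • q ^ (n + 1)) := by
        rw [h1, add_mul, one_mul, mul_assoc, ← pow_succ', add_assoc]
    _ = p * q ^ (n + 2) + (n + 2) • q ^ (n + 1) := by
        rw [add_comm (q ^ (n+1)), ← succ_nsmul]

private lemma aux_qmpm {K M : Type*} [Field K] [AddCommGroup M] [Module K M]
    {p q : Module.End K M} (h : q * p - p * q = 1) {v : M} (hv : q v = 0) :
    ∀ m : ℕ, (q ^ m) ((p ^ m) v) = m.factorial • v := by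
  intro m
  induction m with
  | zero => simp
  | succ m ih =>
    have e1 : (q ^ (m + 1)) ((p ^ (m + 1)) v) = (q ^ m) ((q * p ^ (m + 1)) v) := by
      rw [pow_succ, Module.End.mul_apply, Module.End.mul_apply]
    rw [e1, aux_qp_pow h m]
    have e2 : ((p ^ (m + 1) * q + (m + 1) • p ^ m) : Module.End K M) v
        = (m + 1) • (p ^ m) v := by
      rw [LinearMap.add_apply, Module.End.mul_apply, hv, map_zero, zero_add,
        LinearMap.smul_apply]
    rw [e2, map_nsmul, ih, Nat.factorial_succ, smul_smul]

private lemma aux_ann {K M : Type*} [Field K] [AddCommGroup M] [Module K M]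
    {p q : Module.End K M} (h : q * p - p * q = 1) {v : M} {c : ℕ} (hv : (q ^ c) v = 0) :
    ∀ m : ℕ, (q ^ (c + m)) ((p ^ m) v) = 0 := by
  intro m
  induction m with
  | zero => simpa using hv
  | succ m ih =>
    have hqv : (q ^ (c + m + 1)) ((p ^ m) v) = 0 := by
      rw [pow_succ', Module.End.mul_apply, ih, map_zero]
    have e1 : (q ^ (c + (m + 1))) ((p ^ (m + 1)) v)
        = ((q ^ (c + m + 1) * p) : Module.End K M) ((p ^ m) v) := by
      rw [show c + (m + 1) = c + m + 1 from rfl, pow_succ' p m, Module.End.mul_apply,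
        Module.End.mul_apply]
    rw [e1, aux_q_pow_p h (c + m), LinearMap.add_apply, Module.End.mul_apply, hqv,
      map_zero, zero_add, LinearMap.smul_apply, ih, smul_zero]

section AuxF

variable {K M ι : Type*} [Field K] [AddCommGroup M] [Module K M] [Fintype ι] [DecidableEq ι]
variable (P : ι → Module.End K M)

/-- The product `∏ i, P i ^ k i` over all of `univ`. -/
private def auxF (hPP : ∀ i j, Commute (P i) (P j)) (k : ι →₀ ℕ) : Module.End K M :=
  Finset.univ.noncommProd (fun i => P i ^ k i) (fun i _ j _ _ => (hPP i j).pow_pow _ _)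

variable (hPP : ∀ i j, Commute (P i) (P j))

private lemma auxF_eq_support (k : ι →₀ ℕ) :
    k.support.noncommProd (fun i => P i ^ k i)
      (fun i _ j _ _ => (hPP i j).pow_pow _ _) = auxF P hPP k := by
  unfold auxF
  have h1 : ∀ x ∈ Finset.univ \ k.support, P x ^ k x = (1 : Module.End K M) := by
    intro x hx
    rw [Finsupp.notMem_support_iff.mp (Finset.mem_sdiff.mp hx).2, pow_zero]
  calc k.support.noncommProd (fun i => P i ^ k i) (fun i _ j _ _ => (hPP i j).pow_pow _ _)
      = k.support.noncommProd (fun i => P i ^ k i) (fun i _ j _ _ => (hPP i j).pow_pow _ _)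
        * (Finset.univ \ k.support).noncommProd (fun i => P i ^ k i)
          (fun i _ j _ _ => (hPP i j).pow_pow _ _) := by
        erw [Finset.noncommProd_eq_pow_card _ _ _ 1 h1, one_pow, mul_one]
  _ = (k.support ∪ (Finset.univ \ k.support)).noncommProd (fun i => P i ^ k i)
        (fun i _ j _ _ => (hPP i j).pow_pow _ _) := by
      erw [Finset.noncommProd_union_of_disjoint Finset.disjoint_sdiff]
  _ = Finset.univ.noncommProd (fun i => P i ^ k i)
        (fun i _ j _ _ => (hPP i j).pow_pow _ _) :=
      Finset.noncommProd_congr (Finset.union_sdiff_of_subset (Finset.subset_univ _))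
        (fun _ _ => rfl) _

private lemma auxF_zero : auxF P hPP 0 = 1 := by
  unfold auxF
  erw [Finset.noncommProd_eq_pow_card _ _ _ 1 (fun x _ => by simp), one_pow]

private lemma auxF_add (a b : ι →₀ ℕ) : auxF P hPP (a + b) = auxF P hPP a * auxF P hPP b := by
  unfold auxF
  refine Eq.trans (Finset.noncommProd_congr rfl
    (g := ((fun i => P i ^ a i) * (fun i => P i ^ b i)))
    (fun x _ => by simp [pow_add]) _) ?_
  exact Finset.noncommProd_mul_distrib _ _
    (fun x _ y _ _ => (hPP x y).pow_pow _ _)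
    (fun x _ y _ _ => (hPP x y).pow_pow _ _)
    (fun x _ y _ _ => (hPP x y).pow_pow _ _)

private lemma auxF_single (i : ι) (n : ℕ) : auxF P hPP (Finsupp.single i n) = P i ^ n := by
  unfold auxF
  rw [← Finset.mul_noncommProd_erase Finset.univ (Finset.mem_univ i) _
    (fun x _ y _ h => (hPP x y).pow_pow _ _)]
  have h1 : ∀ x ∈ Finset.univ.erase i, P x ^ (Finsupp.single i n) x = (1 : Module.End K M) := by
    intro x hx
    rw [Finsupp.single_eq_of_ne' (Ne.symm (Finset.ne_of_mem_erase hx)), pow_zero]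
  erw [Finset.noncommProd_eq_pow_card _ _ _ 1 h1, one_pow, mul_one, Finsupp.single_eq_same]

private lemma auxF_commute {y : Module.End K M} (h : ∀ j, Commute y (P j)) (k : ι →₀ ℕ) :
    Commute y (auxF P hPP k) :=
  Finset.noncommProd_commute _ _ _ _ (fun j _ => (h j).pow_right _)

private lemma aux_KQ {Q : ι → Module.End K M}
    (hQPc : ∀ i j, i ≠ j → Commute (Q i) (P j))
    (hQPi : ∀ i, Q i * P i - P i * Q i = 1)
    (i : ι) (k : ι →₀ ℕ) {v : M} (hv : Q i v = 0) :
    Q i (auxF P hPP k v) = (k i) • (auxF P hPP (k - Finsupp.single i 1) v) := by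
  classical
  set G : Module.End K M := (Finset.univ.erase i).noncommProd (fun j => P j ^ k j)
    (fun x _ y _ h => (hPP x y).pow_pow _ _) with hG
  have hsplit : auxF P hPP k = P i ^ k i * G :=
    (Finset.mul_noncommProd_erase Finset.univ (Finset.mem_univ i) _
      (fun x _ y _ h => (hPP x y).pow_pow _ _)).symm
  have hQiG : Commute (Q i) G := by
    rw [hG]
    exact Finset.noncommProd_commute _ _ _ _ (fun j hj =>
      (hQPc i j (Ne.symm (Finset.ne_of_mem_erase hj))).pow_right _)
  cases hn : k i with
  | zero =>
    have hcom : Commute (Q i) (auxF P hPP k) := by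
      rw [hsplit, hn, pow_zero, one_mul]; exact hQiG
    rw [zero_smul, ← Module.End.mul_apply, hcom.eq, Module.End.mul_apply, hv, map_zero]
  | succ m =>
    -- identify auxF (k - single i 1) with P i ^ m * G
    have hG' : auxF P hPP (k - Finsupp.single i 1) = P i ^ m * G := by
      have hsplit' : auxF P hPP (k - Finsupp.single i 1)
          = P i ^ ((k - Finsupp.single i 1 : ι →₀ ℕ) i) *
            (Finset.univ.erase i).noncommProd (fun j => P j ^ ((k - Finsupp.single i 1 : ι →₀ ℕ) j))
              (fun x _ y _ h => (hPP x y).pow_pow _ _) :=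
        (Finset.mul_noncommProd_erase Finset.univ (Finset.mem_univ i) _
          (fun x _ y _ h => (hPP x y).pow_pow _ _)).symm
      have h1 : ((k - Finsupp.single i 1 : ι →₀ ℕ)) i = m := by
        rw [Finsupp.tsub_apply, Finsupp.single_eq_same, hn, Nat.add_sub_cancel]
      have h2 : (Finset.univ.erase i).noncommProd (fun j => P j ^ ((k - Finsupp.single i 1 : ι →₀ ℕ) j))
          (fun x _ y _ h => (hPP x y).pow_pow _ _) = G := by
        rw [hG]
        refine Finset.noncommProd_congr rfl (fun x hx => ?_) _
        rw [Finsupp.tsub_apply, Finsupp.single_eq_of_ne'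
          (Ne.symm (Finset.ne_of_mem_erase hx)), Nat.sub_zero]
      rw [hsplit', h1, h2]
    have h3 : Q i * (P i ^ (m + 1) * G) = P i ^ (m + 1) * G * Q i + (m + 1) • (P i ^ m * G) := by
      rw [← mul_assoc, aux_qp_pow (hQPi i) m, add_mul, smul_mul_assoc, mul_assoc,
        hQiG.eq, ← mul_assoc]
    rw [hsplit, hn, ← Module.End.mul_apply, h3, LinearMap.add_apply, Module.End.mul_apply,
      hv, map_zero, zero_add, LinearMap.smul_apply, Module.End.mul_apply, hG',
      Module.End.mul_apply]

end AuxF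


/-- Structure theorem for modules over a Weyl algebra (Heisenberg representations): if `M` is a
module over `W_V ⊗ W` (encoded by commuting families `P i`, `Q i` of operators satisfying the
canonical commutation relations for a lagrangian splitting `V = m ⊕ m*`, together with arbitrary
operators `T` commuting with them) on which the lagrangian subspace `m` (spanned by the `Q i`)
acts by locally nilpotent endomorphisms, then the natural map `S(m*) ⊗ M^m → M`,
`p₁⋯p_k ⊗ v ↦ p₁⋯p_k · v`, is an isomorphism of modules; in particular `M ≅ K[m] ⊗ M^m`. -/
theorem stmt_12 (K : Type*) [Field K] [CharZero K] (ι : Type*) [Fintype ι] [DecidableEq ι]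
    (M : Type*) [AddCommGroup M] [Module K M]
    (P Q : ι → Module.End K M)
    (hPP : ∀ i j, Commute (P i) (P j))
    (hQQ : ∀ i j, Commute (Q i) (Q j))
    (hQP : ∀ i j, Q i * P j - P j * Q i = if i = j then (1 : Module.End K M) else 0)
    (hnil : ∀ (v : M) (i : ι), ∃ n : ℕ, ((Q i) ^ n) v = 0) :
    -- `Minv = M^m` is the subspace annihilated by `m`; `opk k = ∏ᵢ (P i)^(k i)`;
    -- `Φ` is the natural map `S(m*) ⊗ M^m → M`.
    let Minv : Submodule K M := ⨅ i, LinearMap.ker (Q i)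
    let opk : (ι →₀ ℕ) → Module.End K M := fun k =>
      k.support.noncommProd (fun i => P i ^ k i)
        (fun i _ j _ _ => (hPP i j).pow_pow _ _)
    let Φ : ((ι →₀ ℕ) →₀ ↥Minv) →ₗ[K] M :=
      Finsupp.lsum K fun k => (opk k) ∘ₗ Minv.subtype
    Function.Bijective Φ ∧
    -- the isomorphism is equivariant for every operator `T` commuting with the Weyl algebra
    -- action (so it is an isomorphism of `W_V ⊗ W`-modules)
    (∀ T : Module.End K M, (∀ i, Commute T (P i) ∧ Commute T (Q i)) →
      (∀ v ∈ Minv, T v ∈ Minv) ∧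
      ∀ (k : ι →₀ ℕ) (v : ↥Minv),
        T (Φ (Finsupp.single k v)) = (opk k) (T (v : M))) := by
  intro Minv opk Φ
  classical
  have hQPc : ∀ i j : ι, i ≠ j → Commute (Q i) (P j) := by
    intro i j hij
    have h := hQP i j
    rw [if_neg hij, sub_eq_zero] at h
    exact h
  have hQPi : ∀ i, Q i * P i - P i * Q i = 1 := by
    intro i
    have h := hQP i i
    rwa [if_pos rfl] at h
  have hQmem : ∀ (v : ↥Minv) (i : ι), Q i (v : M) = 0 := by
    intro v i
    exact LinearMap.mem_ker.mp ((Submodule.mem_iInf _).mp v.2 i)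
  have hopk : ∀ k, opk k = auxF P hPP k := fun k => auxF_eq_support P hPP k
  have hΦs : ∀ (k : ι →₀ ℕ) (v : ↥Minv), Φ (Finsupp.single k v) = auxF P hPP k (v : M) := by
    intro k v
    show (Finsupp.lsum K fun k => (opk k) ∘ₗ Minv.subtype) (Finsupp.single k v) = _
    rw [Finsupp.lsum_single, LinearMap.comp_apply, hopk]
    rfl
  -- the lowering operators on the Fock-space side
  set D : ι → Module.End K ((ι →₀ ℕ) →₀ ↥Minv) := fun i =>
    Finsupp.lsum K (fun k => ((k i : K) • Finsupp.lsingle (k - Finsupp.single i 1))) with hDdef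
  have hD : ∀ (i : ι) (k : ι →₀ ℕ) (v : ↥Minv),
      D i (Finsupp.single k v) = (k i : K) • Finsupp.single (k - Finsupp.single i 1) v := by
    intro i k v
    rw [hDdef]
    simp [Finsupp.lsum_single]
  have hDpow : ∀ (i : ι) (m : ℕ) (k : ι →₀ ℕ) (v : ↥Minv),
      ((D i) ^ m) (Finsupp.single k v)
        = (((k i).descFactorial m : K)) • Finsupp.single (k - Finsupp.single i m) v := by
    intro i m
    induction m with
    | zero => intro k v; simp
    | succ m ih =>
      intro k v
      rw [pow_succ, Module.End.mul_apply, hD, map_smul, ih]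
      have hki : ((k - Finsupp.single i 1 : ι →₀ ℕ)) i = k i - 1 := by
        rw [Finsupp.tsub_apply, Finsupp.single_eq_same]
      have hidx : k - Finsupp.single i 1 - Finsupp.single i m = k - Finsupp.single i (m + 1) := by
        rw [tsub_tsub, ← Finsupp.single_add, add_comm 1 m]
      rw [hki, hidx, smul_smul]
      cases hn : k i with
      | zero => rw [Nat.zero_descFactorial_succ]; simp
      | succ n =>
        rw [Nat.succ_sub_one, Nat.succ_descFactorial_succ, Nat.cast_mul]
  have hΦD : ∀ i, Φ ∘ₗ (D i) = (Q i) ∘ₗ Φ := by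
    intro i
    apply Finsupp.lhom_ext
    intro k v
    rw [LinearMap.comp_apply, LinearMap.comp_apply, hD, map_smul, hΦs, hΦs,
      aux_KQ P hPP hQPc hQPi i k (hQmem v i), Nat.cast_smul_eq_nsmul]
  have hΦDpow : ∀ (i : ι) (m : ℕ), Φ ∘ₗ ((D i) ^ m) = ((Q i) ^ m) ∘ₗ Φ := by
    intro i m
    induction m with
    | zero => simp [Module.End.one_eq_id]
    | succ m ih =>
      rw [pow_succ, pow_succ, Module.End.mul_eq_comp, Module.End.mul_eq_comp,
        ← LinearMap.comp_assoc, ih, LinearMap.comp_assoc, hΦD, ← LinearMap.comp_assoc]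
  have hΦL : ∀ (l : ι →₀ ℕ) (L : List ι),
      Φ ∘ₗ (L.map fun i => D i ^ l i).prod = (L.map fun i => Q i ^ l i).prod ∘ₗ Φ := by
    intro l L
    induction L with
    | nil => simp [Module.End.one_eq_id]
    | cons i L ih =>
      rw [List.map_cons, List.map_cons, List.prod_cons, List.prod_cons,
        Module.End.mul_eq_comp, Module.End.mul_eq_comp, ← LinearMap.comp_assoc,
        hΦDpow, LinearMap.comp_assoc, ih, ← LinearMap.comp_assoc]
  have hSapply : ∀ (l : ι →₀ ℕ) (L : List ι) (i : ι), i ∉ L →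
      ((L.map fun j => Finsupp.single j (l j)).sum) i = 0 := by
    intro l L
    induction L with
    | nil => intro i _; rfl
    | cons j L ih =>
      intro i hi
      rw [List.map_cons, List.sum_cons, Finsupp.add_apply,
        Finsupp.single_eq_of_ne' (fun h => hi (by rw [← h]; exact List.mem_cons_self)),
        ih i (fun h => hi (List.mem_cons_of_mem j h)), add_zero]
  have hEL : ∀ (l : ι →₀ ℕ) (L : List ι), L.Nodup → ∀ (k : ι →₀ ℕ) (v : ↥Minv),
      ((L.map fun i => D i ^ l i).prod) (Finsupp.single k v)
        = (((L.map fun i => (k i).descFactorial (l i)).prod : ℕ) : K) •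
            Finsupp.single (k - (L.map fun i => Finsupp.single i (l i)).sum) v := by
    intro l L
    induction L with
    | nil => intro _ k v; simp
    | cons i L ih =>
      intro hnd k v
      have hiL : i ∉ L := (List.nodup_cons.mp hnd).1
      have hLnd : L.Nodup := (List.nodup_cons.mp hnd).2
      rw [List.map_cons, List.prod_cons, Module.End.mul_apply, ih hLnd, map_smul, hDpow]
      have h1 : (k - (L.map fun j => Finsupp.single j (l j)).sum) i = k i := by
        rw [Finsupp.tsub_apply, hSapply l L i hiL, Nat.sub_zero]
      have h2 : k - (L.map fun j => Finsupp.single j (l j)).sum - Finsupp.single i (l i)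
          = k - ((i :: L).map fun j => Finsupp.single j (l j)).sum := by
        rw [tsub_tsub, List.map_cons, List.sum_cons, add_comm]
      rw [h1, h2, smul_smul]
      simp only [List.map_cons, List.prod_cons, List.sum_cons, Nat.cast_mul, mul_comm]
  -- injectivity
  have hinj : Function.Injective Φ := by
    rw [← LinearMap.ker_eq_bot (M := (ι →₀ ℕ) →₀ ↥Minv)]
    rw [LinearMap.ker_eq_bot']
    intro x hx
    by_contra hx0
    obtain ⟨k₀, hk₀mem, hk₀max'⟩ := Set.Finite.exists_maximalFor id
      (↑x.support : Set (ι →₀ ℕ)) (x.support.finite_toSet)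
      (Finset.coe_nonempty.mpr (Finsupp.support_nonempty_iff.mpr hx0))
    have hk₀max : ∀ k ∈ (↑x.support : Set (ι →₀ ℕ)), id k₀ ≤ id k → id k₀ = id k :=
      fun k hk hle => le_antisymm hle (hk₀max' hk hle)
    set L : List ι := Finset.univ.toList with hL
    have hLn : L.Nodup := Finset.nodup_toList _
    have hS : (L.map fun i => Finsupp.single i (k₀ i)).sum = k₀ := by
      rw [hL, Finset.sum_map_toList]
      exact Finsupp.univ_sum_single k₀
    have key : Φ (((L.map fun i => D i ^ k₀ i).prod) x) = 0 := by
      rw [← LinearMap.comp_apply, hΦL k₀ L, LinearMap.comp_apply, hx, map_zero]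
    have hcprod : ∀ k : ι →₀ ℕ, ((L.map fun i => (k i).descFactorial (k₀ i)).prod : ℕ)
        = ∏ i, (k i).descFactorial (k₀ i) := by
      intro k; rw [hL, Finset.prod_map_toList]
    have hEx : ((L.map fun i => D i ^ k₀ i).prod) x
        = ((∏ i, (k₀ i).descFactorial (k₀ i) : ℕ) : K) • Finsupp.single 0 (x k₀) := by
      have e0 : ((L.map fun i => D i ^ k₀ i).prod) x
          = x.sum fun k v => ((L.map fun i => D i ^ k₀ i).prod) (Finsupp.single k v) := by
        conv_lhs => rw [← Finsupp.sum_single x]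
        exact map_finsuppSum _ _ _
      rw [e0]
      rw [Finsupp.sum]
      rw [Finset.sum_eq_single k₀]
      · rw [hEL k₀ L hLn, hS, hcprod, tsub_self]
      · intro k hk hkne
        rw [hEL k₀ L hLn, hcprod]
        have : ∃ i, k i < k₀ i := by
          by_contra hcon
          push_neg at hcon
          exact hkne (hk₀max k hk (Finsupp.le_def.mpr hcon)).symm
        obtain ⟨i, hi⟩ := this
        rw [Finset.prod_eq_zero (Finset.mem_univ i)
          (Nat.descFactorial_eq_zero_iff_lt.mpr hi), Nat.cast_zero, zero_smul]
      · intro hk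
        rw [Finsupp.notMem_support_iff.mp hk]
        simp
    have hc : ((∏ i, (k₀ i).descFactorial (k₀ i) : ℕ) : K) ≠ 0 := by
      rw [Nat.cast_ne_zero]
      refine Finset.prod_ne_zero_iff.mpr fun i _ => ?_
      rw [Nat.descFactorial_self]
      exact (k₀ i).factorial_ne_zero
    rw [hEx, map_smul, hΦs, auxF_zero] at key
    have : (x k₀ : M) = 0 := by
      have := (smul_eq_zero.mp key).resolve_left hc
      simpa using this
    exact Finsupp.mem_support_iff.mp hk₀mem (Subtype.ext this)
  -- surjectivity
  have hsurj : Function.Surjective Φ := by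
    have main : ∀ s : Finset ι, ∀ v : M, v ∈ Submodule.span K
        {w | ∃ (k : ι →₀ ℕ) (u : M), (∀ j, k j ≠ 0 → j ∈ s) ∧ (∀ j ∈ s, Q j u = 0) ∧
          w = auxF P hPP k u} := by
      intro s
      induction s using Finset.induction_on with
      | empty =>
        intro v
        refine Submodule.subset_span ⟨0, v, by simp, by simp, ?_⟩
        rw [auxF_zero]
        rfl
      | insert i s hi ih =>
        intro v
        refine Submodule.span_le.mpr (fun w hw => ?_) (ih v)
        obtain ⟨k, u, hk, hu, rfl⟩ := hw
        obtain ⟨d, hd⟩ := hnil u i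
        have inner : ∀ (d : ℕ) (u : M), ((Q i) ^ d) u = 0 → (∀ j ∈ s, Q j u = 0) →
            u ∈ Submodule.span K {w | ∃ (n : ℕ) (u' : M), Q i u' = 0 ∧
              (∀ j ∈ s, Q j u' = 0) ∧ w = ((P i) ^ n) u'} := by
          intro d
          induction d with
          | zero =>
            intro u h0 _
            rw [pow_zero, Module.End.one_apply] at h0
            rw [h0]
            exact Submodule.zero_mem _
          | succ d ihd =>
            intro u hdu hsu
            set y : M := ((Q i) ^ d) u with hy
            have hy1 : Q i y = 0 := by
              rw [hy, ← Module.End.mul_apply, ← pow_succ']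
              exact hdu
            have hy2 : ∀ j ∈ s, Q j y = 0 := by
              intro j hj
              rw [hy, ← Module.End.mul_apply, ((hQQ j i).pow_right d).eq,
                Module.End.mul_apply, hsu j hj, map_zero]
            set c : K := ((d.factorial : K))⁻¹ with hc
            have hu'1 : ((Q i) ^ d) (u - c • ((P i) ^ d) y) = 0 := by
              rw [map_sub, map_smul, aux_qmpm (hQPi i) hy1 d, ← hy,
                ← Nat.cast_smul_eq_nsmul K, smul_smul, hc,
                inv_mul_cancel₀ (Nat.cast_ne_zero.mpr d.factorial_ne_zero), one_smul,
                sub_self]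
            have hu'2 : ∀ j ∈ s, Q j (u - c • ((P i) ^ d) y) = 0 := by
              intro j hj
              have hji : j ≠ i := fun h => hi (h ▸ hj)
              rw [map_sub, map_smul, ← Module.End.mul_apply (Q j),
                ((hQPc j i hji).pow_right d).eq, Module.End.mul_apply, hy2 j hj,
                map_zero, smul_zero, hsu j hj, sub_zero]
            have hmem := ihd _ hu'1 hu'2
            have hgen : ((P i) ^ d) y ∈ Submodule.span K {w | ∃ (n : ℕ) (u' : M),
                Q i u' = 0 ∧ (∀ j ∈ s, Q j u' = 0) ∧ w = ((P i) ^ n) u'} :=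
              Submodule.subset_span ⟨d, y, hy1, hy2, rfl⟩
            have hadd := Submodule.add_mem _ hmem (Submodule.smul_mem _ c hgen)
            rwa [sub_add_cancel] at hadd
        have humem := inner d u hd hu
        have hmap : auxF P hPP k u ∈ Submodule.map (auxF P hPP k)
            (Submodule.span K {w | ∃ (n : ℕ) (u' : M), Q i u' = 0 ∧
              (∀ j ∈ s, Q j u' = 0) ∧ w = ((P i) ^ n) u'}) :=
          Submodule.mem_map_of_mem humem
        rw [Submodule.map_span] at hmap
        refine Submodule.span_le.mpr (fun w hw => ?_) hmap
        obtain ⟨w', ⟨n, u', hq1, hq2, rfl⟩, rfl⟩ := hw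
        refine Submodule.subset_span ⟨k + Finsupp.single i n, u', ?_, ?_, ?_⟩
        · intro j hj
          rw [Finsupp.add_apply] at hj
          rcases Nat.eq_zero_or_pos (k j) with h0 | hpos
          · have : Finsupp.single i n j ≠ 0 := by
              intro h; exact hj (by rw [h0, h, add_zero])
            have : j = i := by
              by_contra hne
              exact this (Finsupp.single_eq_of_ne' (fun h => hne h.symm))
            rw [this]
            exact Finset.mem_insert_self i s
          · exact Finset.mem_insert_of_mem (hk j (Nat.pos_iff_ne_zero.mp hpos))
        · intro j hj
          rcases Finset.mem_insert.mp hj with h | h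
          · rw [h]; exact hq1
          · exact hq2 j h
        · rw [auxF_add, auxF_single, Module.End.mul_apply]
    intro v
    have hv := main Finset.univ v
    have hle : Submodule.span K {w | ∃ (k : ι →₀ ℕ) (u : M),
        (∀ j, k j ≠ 0 → j ∈ Finset.univ) ∧ (∀ j ∈ Finset.univ, Q j u = 0) ∧
        w = auxF P hPP k u} ≤ LinearMap.range Φ := by
      refine Submodule.span_le.mpr ?_
      rintro w ⟨k, u, -, hu, rfl⟩
      have hum : u ∈ Minv := (Submodule.mem_iInf _).mpr fun i =>
        LinearMap.mem_ker.mpr (hu i (Finset.mem_univ i))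
      exact ⟨Finsupp.single k ⟨u, hum⟩, by rw [hΦs]⟩
    obtain ⟨x, hxv⟩ := hle hv
    exact ⟨x, hxv⟩
  refine ⟨⟨hinj, hsurj⟩, ?_⟩
  intro T hT
  constructor
  · intro v hv
    refine (Submodule.mem_iInf _).mpr fun i => LinearMap.mem_ker.mpr ?_
    rw [← Module.End.mul_apply, ← ((hT i).2).eq, Module.End.mul_apply,
      LinearMap.mem_ker.mp ((Submodule.mem_iInf _).mp hv i), map_zero]
  · intro k v
    rw [hΦs, hopk]
    have hcom : Commute T (auxF P hPP k) := auxF_commute P hPP (fun j => (hT j).1) k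
    rw [← Module.End.mul_apply, hcom.eq, Module.End.mul_apply]
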